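/- Every chordal graph admits a clique tree satisfying the clique intersection property: there exists a tree on the set of cliques C_1,...,C_l such that for every pair of distinct cliques C_i and C_j, the intersection C_i ∩ C_j is contained in every clique on the unique path between C_i and C_j in the tree. -/

import Mathlib

open Finset

def SimpleGraph.IsChordal {V : Type*} (G : SimpleGraph V) : Prop :=
  ∀ (v : V) (w : G.Walk v v), w.IsCycle → 4 ≤ w.length →
    ∃ a b, a ∈ w.support ∧ b ∈ w.support ∧ G.Adj a b ∧ ¬ w.toSubgraph.Adj a b

def SimpleGraph.IsMaxClique {V : Type*} (G : SimpleGraph V) (s : Finset V) : Prop :=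
  G.IsClique ↑s ∧ ∀ t : Finset V, G.IsClique ↑t → s ⊆ t → s = t

namespace CliqueTreeProof

open SimpleGraph Walk

variable {V : Type*} {G : SimpleGraph V}

/-- A simplicial vertex. -/
def Simp (G : SimpleGraph V) (v : V) : Prop := G.IsClique (G.neighborSet v)

lemma chordal_induce (hG : G.IsChordal) (s : Set V) : (G.induce s).IsChordal := by
  intro v w hw hlen
  classical
  let f : G.induce s ↪g G := SimpleGraph.Embedding.induce s
  have hinj : Function.Injective f := f.injective
  obtain ⟨a, b, ha, hb, hab, hnadj⟩ :=
    hG (f v) (w.map f.toHom) ((Walk.map_isCycle_iff_of_injective hinj).2 hw)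
      (by rwa [Walk.length_map])
  rw [Walk.support_map, List.mem_map] at ha hb
  obtain ⟨a', ha', rfl⟩ := ha
  obtain ⟨b', hb', rfl⟩ := hb
  refine ⟨a', b', ha', hb', ?_, ?_⟩
  · exact hab
  · intro h
    apply hnadj
    rw [Walk.toSubgraph_map]
    exact ⟨a', b', h, rfl, rfl⟩

lemma exists_maxclique_supset [Fintype V] {t : Finset V} (ht : G.IsClique ↑t) :
    ∃ s : Finset V, G.IsMaxClique s ∧ t ⊆ s := by
  classical
  obtain ⟨m, hm, hmax⟩ : ∃ m ∈ ((Finset.univ : Finset (Finset V)).filter fun s : Finset V =>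
      G.IsClique ↑s ∧ t ⊆ s), ∀ x ∈ ((Finset.univ : Finset (Finset V)).filter fun s : Finset V =>
      G.IsClique ↑s ∧ t ⊆ s), ¬ m < x := by
    obtain ⟨m, hm⟩ := Finset.exists_maximal
      (s := (Finset.univ : Finset (Finset V)).filter fun s : Finset V => G.IsClique ↑s ∧ t ⊆ s)
      ⟨t, by simp [ht]⟩
    exact ⟨m, hm.1, fun x hx hlt => hlt.not_ge (hm.2 hx hlt.le)⟩
  simp only [Finset.mem_filter, Finset.mem_univ, true_and] at hm hmax
  refine ⟨m, ⟨hm.1, fun u hu hsub => ?_⟩, hm.2⟩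
  by_contra hne
  exact hmax u ⟨hu, hm.2.trans hsub⟩ (lt_of_le_of_ne hsub hne)

/-- Any nonnil walk decomposes as a `concat`. -/
lemma exists_concat {u v : V} (p : G.Walk u v) (h : p.length ≠ 0) :
    ∃ (x : V) (q : G.Walk u x) (h' : G.Adj x v), p = q.concat h' := by
  cases p with
  | nil => simp at h
  | cons ha q => exact Walk.exists_cons_eq_concat ha q

lemma isPath_of_concat {u x v : V} {q : G.Walk u x} {h : G.Adj x v}
    (hp : (q.concat h).IsPath) : q.IsPath := by
  rw [Walk.isPath_def] at hp ⊢
  rw [Walk.support_concat] at hp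
  exact (List.nodup_append.1 hp).1

lemma not_mem_support_of_concat {u x v : V} {q : G.Walk u x} {h : G.Adj x v}
    (hp : (q.concat h).IsPath) : v ∉ q.support := by
  rw [Walk.isPath_def, Walk.support_concat] at hp
  intro hv
  exact (List.nodup_append.1 hp).2.2 v hv v (List.mem_singleton_self v) rfl

lemma path_loop_nil {u : V} (q : G.Walk u u) (hq : q.IsPath) : q = Walk.nil := by
  cases q with
  | nil => rfl
  | cons ha q' =>
    exfalso
    rw [Walk.isPath_def, Walk.support_cons] at hq
    exact (List.nodup_cons.1 hq).1 q'.end_mem_support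


/-! ### Separators and reachability -/

/-- `x` is reachable from `a` by a walk avoiding `S`. -/
def Reaches (G : SimpleGraph V) (S : Finset V) (a x : V) : Prop :=
  ∃ p : G.Walk a x, ∀ s ∈ S, s ∉ p.support

/-- `S` separates `a` from `b`. -/
def Seps (G : SimpleGraph V) (S : Finset V) (a b : V) : Prop :=
  ∀ p : G.Walk a b, ∃ s ∈ S, s ∈ p.support

lemma Reaches.not_mem {S : Finset V} {a x : V} (h : Reaches G S a x) : x ∉ S := by
  obtain ⟨p, hp⟩ := h
  intro hx
  exact hp x hx p.end_mem_support

lemma Reaches.refl {S : Finset V} {a : V} (ha : a ∉ S) : Reaches G S a a :=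
  ⟨Walk.nil, fun s hs hmem => by
    rw [Walk.support_nil, List.mem_singleton] at hmem; exact ha (hmem ▸ hs)⟩

lemma Reaches.adj {S : Finset V} {a x y : V} (h : Reaches G S a x) (hxy : G.Adj x y)
    (hy : y ∉ S) : Reaches G S a y := by
  obtain ⟨p, hp⟩ := h
  refine ⟨p.concat hxy, fun s hs hmem => ?_⟩
  rw [Walk.support_concat, List.mem_append, List.mem_singleton] at hmem
  rcases hmem with hmem | rfl
  · exact hp s hs hmem
  · exact hy hs

lemma Reaches.walk_between {S : Finset V} {a x y : V} (hx : Reaches G S a x)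
    (hy : Reaches G S a y) : ∃ p : G.Walk x y, ∀ s ∈ S, s ∉ p.support := by
  obtain ⟨p, hp⟩ := hx
  obtain ⟨q, hq⟩ := hy
  refine ⟨p.reverse.append q, fun s hs hmem => ?_⟩
  rw [Walk.mem_support_append_iff, Walk.support_reverse, List.mem_reverse] at hmem
  rcases hmem with hmem | hmem
  · exact hp s hs hmem
  · exact hq s hs hmem

lemma Seps.not_reaches {S : Finset V} {a b : V} (h : Seps G S a b) : ¬ Reaches G S a b := by
  rintro ⟨p, hp⟩
  obtain ⟨s, hs, hmem⟩ := h p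
  exact hp s hs hmem

lemma Seps.symm {S : Finset V} {a b : V} (h : Seps G S a b) : Seps G S b a := by
  intro p
  obtain ⟨s, hs, hmem⟩ := h p.reverse
  rw [Walk.support_reverse, List.mem_reverse] at hmem
  exact ⟨s, hs, hmem⟩

lemma Seps.not_both {S : Finset V} {a b z : V} (h : Seps G S a b)
    (ha : Reaches G S a z) (hb : Reaches G S b z) : False := by
  obtain ⟨p, hp⟩ := ha
  obtain ⟨q, hq⟩ := hb
  obtain ⟨s, hs, hmem⟩ := h (p.append q.reverse)
  rw [Walk.mem_support_append_iff, Walk.support_reverse, List.mem_reverse] at hmem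
  rcases hmem with hmem | hmem
  · exact hp s hs hmem
  · exact hq s hs hmem

lemma reaches_of_mem_support [DecidableEq V] {S : Finset V} {a z w : V} {p : G.Walk a z}
    (hp : ∀ s ∈ S, s ∉ p.support) (hw : w ∈ p.support) : Reaches G S a w :=
  ⟨p.takeUntil w hw, fun s hs hmem => hp s hs (p.support_takeUntil_subset hw hmem)⟩

lemma key_neighbor [DecidableEq V] {S : Finset V} {a b s : V} (hS : Seps G S a b) (ha : a ∉ S)
    (hs : s ∈ S) (hmin : ¬ Seps G (S.erase s) a b) :
    ∃ x, Reaches G S a x ∧ G.Adj x s := by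
  classical
  rw [Seps] at hmin
  push_neg at hmin
  obtain ⟨p, hp⟩ := hmin
  obtain ⟨s', hs', hmem⟩ := hS p
  have hss : s' = s := by
    by_contra hne
    exact hp s' (Finset.mem_erase.2 ⟨hne, hs'⟩) hmem
  subst hss
  have hcount := p.count_support_takeUntil_eq_one hmem
  set q := p.takeUntil s' hmem with hq
  have hlen : q.length ≠ 0 := by
    intro h0
    exact ha (Walk.eq_of_length_eq_zero h0 ▸ hs)
  obtain ⟨z, q', hadj, hdecomp⟩ := exists_concat q hlen
  have hsupp : q.support = q'.support ++ [s'] := by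
    rw [hdecomp, Walk.support_concat]
  have hnotmem : s' ∉ q'.support := by
    have h0 : q'.support.count s' = 0 := by
      rw [hsupp, List.count_append] at hcount
      simpa using hcount
    exact List.count_eq_zero.1 h0
  refine ⟨z, ⟨q', fun t ht hmem' => ?_⟩, hadj⟩
  by_cases hts : t = s'
  · exact hnotmem (hts ▸ hmem')
  · refine hp t (Finset.mem_erase.2 ⟨hts, ht⟩) ?_
    apply p.support_takeUntil_subset hmem
    rw [hsupp]
    exact List.mem_append_left _ hmem'

/-! ### Minimal length walks have no chords -/

lemma subgraph_adj_of_le {H K : G.Subgraph} (h : H ≤ K) {u w : V} (hadj : H.Adj u w) :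
    K.Adj u w := h.2 hadj

lemma exists_min_path (x y : V) (P : V → Prop)
    (hP : ∃ p : G.Walk x y, ∀ z ∈ p.support, P z) :
    ∃ p : G.Walk x y, p.IsPath ∧ (∀ z ∈ p.support, P z) ∧
      ∀ u w, u ∈ p.support → w ∈ p.support → G.Adj u w → p.toSubgraph.Adj u w := by
  classical
  have hex : ∃ n, ∃ p : G.Walk x y, (∀ z ∈ p.support, P z) ∧ p.length = n := by
    obtain ⟨p, hp⟩ := hP; exact ⟨p.length, p, hp, rfl⟩
  set n0 := Nat.find hex with hn0
  obtain ⟨p, hpP, hplen⟩ := Nat.find_spec hex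
  have hmin : ∀ q : G.Walk x y, (∀ z ∈ q.support, P z) → n0 ≤ q.length := by
    intro q hq
    exact Nat.find_le ⟨q, hq, rfl⟩
  set pb := p.bypass with hpb
  have hbP : ∀ z ∈ pb.support, P z := fun z hz => hpP z (p.support_bypass_subset hz)
  have hblen : pb.length = n0 := by
    have h1 := p.length_bypass_le
    rw [hplen] at h1
    have h2 : n0 ≤ pb.length := hmin pb hbP
    exact le_antisymm (by rw [hn0]; exact h1) h2
  have hbpath : pb.IsPath := p.bypass_isPath
  refine ⟨pb, hbpath, hbP, ?_⟩
  have claim : ∀ (u w : V) (q : G.Walk x u) (r : G.Walk u y), q.append r = pb →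
      w ∈ r.support → G.Adj u w → pb.toSubgraph.Adj u w := by
    intro u w q r hqr hw hadj
    obtain ⟨t, r2, hr⟩ := Walk.mem_support_iff_exists_append.mp hw
    have hsubr : ∀ z ∈ r.support, z ∈ pb.support := by
      intro z hz
      rw [← hqr, Walk.mem_support_append_iff]; exact Or.inr hz
    have hsubq : ∀ z ∈ q.support, z ∈ pb.support := by
      intro z hz
      rw [← hqr, Walk.mem_support_append_iff]; exact Or.inl hz
    have hshort : n0 ≤ (q.append (Walk.cons hadj r2)).length := by
      apply hmin
      intro z hz
      rw [Walk.mem_support_append_iff] at hz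
      rcases hz with hz | hz
      · exact hbP z (hsubq z hz)
      · rw [Walk.support_cons, List.mem_cons] at hz
        rcases hz with rfl | hz
        · exact hbP z (hsubr z r.start_mem_support)
        · refine hbP z (hsubr z ?_)
          rw [hr, Walk.mem_support_append_iff]; exact Or.inr hz
    have hlen1 : q.length + r.length = pb.length := by
      have := congr_arg Walk.length hqr
      rwa [Walk.length_append] at this
    have hlen2 : t.length + r2.length = r.length := by
      have := congr_arg Walk.length hr.symm
      rwa [Walk.length_append] at this
    have hlen3 : (q.append (Walk.cons hadj r2)).length = q.length + r2.length + 1 := by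
      rw [Walk.length_append, Walk.length_cons]; omega
    have htlen : t.length = 1 := by
      have htne : t.length ≠ 0 := fun h0 => hadj.ne (Walk.eq_of_length_eq_zero h0)
      omega
    have hadj_t : t.toSubgraph.Adj u w := by
      have h1 : t.getVert 1 = w := by
        have := t.getVert_length
        rwa [htlen] at this
      have h2 := Walk.toSubgraph_adj_getVert t (by omega : 0 < t.length)
      simpa only [Nat.zero_add, Walk.getVert_zero, h1] using h2
    have hle : t.toSubgraph ≤ pb.toSubgraph := by
      calc t.toSubgraph ≤ r.toSubgraph := by
            rw [hr, Walk.toSubgraph_append]; exact le_sup_left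
        _ ≤ pb.toSubgraph := by
            rw [← hqr, Walk.toSubgraph_append]; exact le_sup_right
    exact subgraph_adj_of_le hle hadj_t
  intro u w hu hw hadj
  obtain ⟨q, r, hqr⟩ := Walk.mem_support_iff_exists_append.mp hu
  rw [hqr, Walk.mem_support_append_iff] at hw
  rcases hw with hw | hw
  · obtain ⟨q1, q2, hq⟩ := Walk.mem_support_iff_exists_append.mp hw
    refine (claim w u q1 (q2.append r) ?_ ?_ hadj.symm).symm
    · rw [Walk.append_assoc, ← hq, ← hqr]
    · rw [Walk.mem_support_append_iff]; exact Or.inl q2.end_mem_support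
  · exact claim u w q r hqr.symm hw hadj


lemma Reaches.trans {S : Finset V} {a x z : V} (h : Reaches G S a x) {p : G.Walk x z}
    (hp : ∀ s ∈ S, s ∉ p.support) : Reaches G S a z := by
  obtain ⟨q, hq⟩ := h
  refine ⟨q.append p, fun s hs hmem => ?_⟩
  rw [Walk.mem_support_append_iff] at hmem
  rcases hmem with hmem | hmem
  · exact hq s hs hmem
  · exact hp s hs hmem

/-- One-sided chordless path through the `a`-side of a minimal separator. -/
lemma side_path [DecidableEq V] {S : Finset V} {a b x y : V}
    (hS : Seps G S a b) (ha : a ∉ S)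
    (hmin : ∀ s ∈ S, ¬ Seps G (S.erase s) a b)
    (hx : x ∈ S) (hy : y ∈ S) (hxy : x ≠ y) (hnadj : ¬ G.Adj x y) :
    ∃ p : G.Walk x y, p.IsPath ∧ 2 ≤ p.length ∧
      (∀ z ∈ p.support, z = x ∨ z = y ∨ Reaches G S a z) ∧
      (∀ u w, u ∈ p.support → w ∈ p.support → G.Adj u w → p.toSubgraph.Adj u w) := by
  obtain ⟨x', hx'R, hx'adj⟩ := key_neighbor hS ha hx (hmin x hx)
  obtain ⟨y', hy'R, hy'adj⟩ := key_neighbor hS ha hy (hmin y hy)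
  obtain ⟨m, hm⟩ := hx'R.walk_between hy'R
  have hW0 : ∀ z ∈ (Walk.cons hx'adj.symm (m.concat hy'adj.symm.symm)).support,
      z = x ∨ z = y ∨ Reaches G S a z := by
    intro z hz
    rw [Walk.support_cons, List.mem_cons] at hz
    rcases hz with rfl | hz
    · exact Or.inl rfl
    · rw [Walk.support_concat, List.mem_append, List.mem_singleton] at hz
      rcases hz with hz | rfl
    -- z on m: reaches
      · refine Or.inr (Or.inr (hx'R.trans (p := m.takeUntil z hz) fun s hs hmem => ?_))
        exact hm s hs (m.support_takeUntil_subset hz hmem)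
      · exact Or.inr (Or.inl rfl)
  obtain ⟨p, hpath, hP, hchord⟩ := exists_min_path x y
    (fun z => z = x ∨ z = y ∨ Reaches G S a z) ⟨_, hW0⟩
  refine ⟨p, hpath, ?_, hP, hchord⟩
  have h0 : p.length ≠ 0 := fun h => hxy (Walk.eq_of_length_eq_zero h)
  have h1 : p.length ≠ 1 := by
    intro h
    apply hnadj
    have hadj := Walk.toSubgraph_adj_getVert p (by omega : 0 < p.length)
    have hy1 : p.getVert 1 = y := by
      have := p.getVert_length
      rwa [h] at this
    rw [p.getVert_zero, hy1] at hadj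
    exact p.toSubgraph.adj_sub hadj
  omega

lemma minsep_clique [DecidableEq V] (hG : G.IsChordal) {S : Finset V} {a b : V}
    (hS : Seps G S a b) (ha : a ∉ S) (hb : b ∉ S) (hnadj : ¬ G.Adj a b) (hne : a ≠ b)
    (hmin : ∀ s ∈ S, ¬ Seps G (S.erase s) a b) : G.IsClique (↑S : Set V) := by
  intro x hx y hy hxy
  by_contra hnadjxy
  rw [Finset.mem_coe] at hx hy
  have hminb : ∀ s ∈ S, ¬ Seps G (S.erase s) b a := by
    intro s hs hcon
    exact hmin s hs hcon.symm
  obtain ⟨p, hppath, hplen, hpP, hpchord⟩ := side_path hS ha hmin hx hy hxy hnadjxy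
  obtain ⟨q, hqpath, hqlen, hqP, hqchord⟩ := side_path hS.symm hb hminb hx hy hxy hnadjxy
  have hABdisj : ∀ z, Reaches G S a z → Reaches G S b z → False := fun z h1 h2 =>
    hS.not_both h1 h2
  have hSnotR : ∀ z ∈ S, ¬ Reaches G S a z := fun z hz h => h.not_mem hz
  have hSnotRb : ∀ z ∈ S, ¬ Reaches G S b z := fun z hz h => h.not_mem hz
  have hinter : ∀ z, z ∈ p.support → z ∈ q.support → z = x ∨ z = y := by
    intro z hzp hzq
    rcases hpP z hzp with rfl | rfl | hza
    · exact Or.inl rfl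
    · exact Or.inr rfl
    · rcases hqP z hzq with rfl | rfl | hzb
      · exact Or.inl rfl
      · exact Or.inr rfl
      · exact (hABdisj z hza hzb).elim
  set c : G.Walk x x := p.append q.reverse with hc
  have hclen : c.length = p.length + q.length := by
    rw [hc, Walk.length_append, Walk.length_reverse]
  have hcsup : ∀ z, z ∈ c.support → z ∈ p.support ∨ z ∈ q.support := by
    intro z hz
    rw [hc, Walk.mem_support_append_iff, Walk.support_reverse, List.mem_reverse] at hz
    exact hz
  have hccycle : c.IsCycle := by
    constructor
    · constructor
      · constructor
        -- edges nodup
        rw [hc, Walk.edges_append, List.nodup_append]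
        refine ⟨hppath.isTrail.edges_nodup, (hqpath.reverse).isTrail.edges_nodup, ?_⟩
        intro e hep e' heq hee'
        rw [← hee'] at heq
        rw [Walk.edges_reverse, List.mem_reverse] at heq
        induction e with
        | h u w =>
          have hup : u ∈ p.support := Walk.fst_mem_support_of_mem_edges p hep
          have hwp : w ∈ p.support := Walk.snd_mem_support_of_mem_edges p hep
          have huq : u ∈ q.support := Walk.fst_mem_support_of_mem_edges q heq
          have hwq : w ∈ q.support := Walk.snd_mem_support_of_mem_edges q heq
          have hadj : G.Adj u w := Walk.adj_of_mem_edges p hep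
          rcases hinter u hup huq with rfl | rfl
          · rcases hinter w hwp hwq with rfl | rfl
            · exact hadj.ne rfl
            · exact hnadjxy hadj
          · rcases hinter w hwp hwq with rfl | rfl
            · exact hnadjxy hadj.symm
            · exact hadj.ne rfl
      · -- ne nil
        intro hnil
        have := congr_arg Walk.length hnil
        rw [hclen] at this
        simp only [Walk.length_nil] at this
        omega
    · -- support tail nodup
      rw [hc, Walk.tail_support_append, List.nodup_append]
      refine ⟨hppath.support_nodup.tail, (hqpath.reverse).support_nodup.tail, ?_⟩
      intro z hzp z' hzq hzz'
      rw [← hzz'] at hzq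
      have hzp' : z ∈ p.support := List.mem_of_mem_tail hzp
      have hzq' : z ∈ q.support := by
        have := List.mem_of_mem_tail hzq
        rwa [Walk.support_reverse, List.mem_reverse] at this
      rcases hinter z hzp' hzq' with rfl | rfl
      · have : z ∉ p.support.tail := by
          have hnd := hppath.support_nodup
          rw [p.support_eq_cons] at hnd
          exact (List.nodup_cons.1 hnd).1
        exact this hzp
      · have : z ∉ q.reverse.support.tail := by
          have hnd := (hqpath.reverse).support_nodup
          rw [q.reverse.support_eq_cons] at hnd
          exact (List.nodup_cons.1 hnd).1
        exact this hzq
  obtain ⟨u, w, hu, hw, hadj, hnsub⟩ := hG x c hccycle (by omega)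
  have hup := hcsup u hu
  have hwp := hcsup w hw
  have hsubp : p.toSubgraph ≤ c.toSubgraph := by
    rw [hc, Walk.toSubgraph_append]; exact le_sup_left
  have hsubq : q.toSubgraph ≤ c.toSubgraph := by
    rw [hc, Walk.toSubgraph_append, Walk.toSubgraph_reverse]; exact le_sup_right
  have hcase_pp : u ∈ p.support → w ∈ p.support → False := fun h1 h2 =>
    hnsub (subgraph_adj_of_le hsubp (hpchord u w h1 h2 hadj))
  have hcase_qq : u ∈ q.support → w ∈ q.support → False := fun h1 h2 =>
    hnsub (subgraph_adj_of_le hsubq (hqchord u w h1 h2 hadj))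
  have hmixed : ∀ u' w', G.Adj u' w' → u' ∈ p.support → u' ∉ q.support →
      w' ∈ q.support → w' ∉ p.support → False := by
    intro u' w' hadj' hup' hunq hwq' hwnp
    have hu'A : Reaches G S a u' := by
      rcases hpP u' hup' with rfl | rfl | h
      · exact absurd q.start_mem_support hunq
      · exact absurd q.end_mem_support hunq
      · exact h
    have hw'B : Reaches G S b w' := by
      rcases hqP w' hwq' with rfl | rfl | h
      · exact absurd p.start_mem_support hwnp
      · exact absurd p.end_mem_support hwnp
      · exact h
    have hw'nS : w' ∉ S := hw'B.not_mem
    exact hABdisj w' (hu'A.adj hadj' hw'nS) hw'B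
  rcases hup with h1 | h1 <;> rcases hwp with h2 | h2
  · exact hcase_pp h1 h2
  · by_cases h3 : w ∈ p.support
    · exact hcase_pp h1 h3
    · by_cases h4 : u ∈ q.support
      · exact hcase_qq h4 h2
      · exact hmixed u w hadj h1 h4 h2 h3
  · by_cases h3 : u ∈ p.support
    · exact hcase_pp h3 h2
    · by_cases h4 : w ∈ q.support
      · exact hcase_qq h1 h4
      · exact hmixed w u hadj.symm h2 h4 h1 h3
  · exact hcase_qq h1 h2


lemma induce_adj_iff {s : Set V} {u v : ↥s} : (G.induce s).Adj u v ↔ G.Adj ↑u ↑v :=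
  Iff.rfl

lemma adj_of_length_one {u v : V} {p : G.Walk u v} (h : p.length = 1) : G.Adj u v := by
  have hadj := Walk.toSubgraph_adj_getVert p (by omega : 0 < p.length)
  have h1 : p.getVert 1 = v := by
    have := p.getVert_length
    rwa [h] at this
  rw [p.getVert_zero, h1] at hadj
  exact p.toSubgraph.adj_sub hadj

theorem dirac_pair : ∀ (n : ℕ) (V : Type u) [Fintype V] (G : SimpleGraph V),
    Fintype.card V ≤ n → G.IsChordal → ∀ a b : V, a ≠ b → ¬ G.Adj a b →
    ∃ x y : V, Simp G x ∧ Simp G y ∧ x ≠ y ∧ ¬ G.Adj x y := by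
  intro n
  induction n with
  | zero =>
    intro V _ G hcard hG a b hne hnadj
    have : 0 < Fintype.card V := Fintype.card_pos_iff.2 ⟨a⟩
    omega
  | succ n IH =>
    intro V _ G hcard hG a b hne hnadj
    classical
    -- a minimal separator
    set s0 : Finset V := (Finset.univ.erase b).erase a with hs0
    have hs0sep : Seps G s0 a b := by
      intro p
      set q := p.bypass with hq
      have hqpath : q.IsPath := p.bypass_isPath
      have h0 : q.length ≠ 0 := fun h => hne (Walk.eq_of_length_eq_zero h)
      have h1 : q.length ≠ 1 := fun h => hnadj (adj_of_length_one h)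
      cases hqe : q with
      | nil => rw [hqe] at h0; simp at h0
      | @cons _ z _ hadj q' =>
        have hzq : z ∈ q.support := by
          rw [hqe, Walk.support_cons]
          exact List.mem_cons_of_mem _ q'.start_mem_support
        have hza : z ≠ a := by
          intro hcon
          have hnd := hqpath.support_nodup
          rw [hqe, Walk.support_cons] at hnd
          exact (List.nodup_cons.1 hnd).1 (hcon ▸ q'.start_mem_support)
        have hzb : z ≠ b := by
          intro hcon
          subst hcon
          have : q' = Walk.nil := path_loop_nil q' (by
            have := hqpath
            rw [hqe] at this
            exact this.of_cons)
          rw [hqe, this] at h1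
          simp at h1
        refine ⟨z, ?_, p.support_bypass_subset hzq⟩
        rw [hs0]
        exact Finset.mem_erase.2 ⟨hza, Finset.mem_erase.2 ⟨hzb, Finset.mem_univ z⟩⟩
    obtain ⟨S, hSF, hSmin⟩ : ∃ S ∈ ((s0.powerset).filter fun S => Seps G S a b),
        ∀ x ∈ ((s0.powerset).filter fun S => Seps G S a b), ¬ x < S := by
      obtain ⟨S, hS⟩ := Finset.exists_minimal
        (s := (s0.powerset).filter fun S => Seps G S a b)
        ⟨s0, Finset.mem_filter.2 ⟨Finset.mem_powerset_self s0, hs0sep⟩⟩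
      exact ⟨S, hS.1, fun x hx => hS.not_lt hx⟩
    rw [Finset.mem_filter, Finset.mem_powerset] at hSF
    obtain ⟨hSsub, hSsep⟩ := hSF
    have haS : a ∉ S := fun h => (Finset.mem_erase.1 (hSsub h)).1 rfl
    have hbS : b ∉ S := fun h =>
      (Finset.mem_erase.1 (Finset.mem_erase.1 (hSsub h)).2).1 rfl
    have hminS : ∀ s ∈ S, ¬ Seps G (S.erase s) a b := by
      intro s hs hcon
      exact hSmin (S.erase s)
        (Finset.mem_filter.2 ⟨Finset.mem_powerset.2 ((S.erase_subset s).trans hSsub), hcon⟩)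
        (Finset.erase_ssubset hs)
    have hminSb : ∀ s ∈ S, ¬ Seps G (S.erase s) b a := fun s hs hcon => hminS s hs hcon.symm
    have hSclique : G.IsClique (↑S : Set V) :=
      minsep_clique hG hSsep haS hbS hnadj hne hminS
    -- the one-sided simplicial vertex extraction
    have main_side : ∀ (a' b' : V), Seps G S a' b' → a' ∉ S → b' ∉ S →
        (∀ s ∈ S, ¬ Seps G (S.erase s) a' b') →
        ∃ x : V, Reaches G S a' x ∧ Simp G x := by
      intro a' b' hS' ha' hb' hmin'
      set A : Set V := {z | Reaches G S a' z} ∪ ↑S with hA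
      have hb'A : b' ∉ A := by
        rw [hA]
        rintro (h | h)
        · exact hS'.not_reaches h
        · exact hb' h
      have hcardA : Fintype.card ↥A ≤ n := by
        have hlt : Fintype.card ↥A < Fintype.card V := by
          apply Fintype.card_lt_of_injective_of_notMem (f := (Subtype.val : ↥A → V))
            Subtype.val_injective (b := b')
          rintro ⟨z, hzz⟩
          exact hb'A (hzz ▸ z.2)
        omega
      have hG1 : (G.induce A).IsChordal := chordal_induce hG A
      have ha'A : a' ∈ A := Or.inl (Reaches.refl ha')
      -- find a simplicial vertex of the induced graph which is reached from a'
      have step : ∃ xh : ↥A, Reaches G S a' ↑xh ∧ Simp (G.induce A) xh := by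
        by_cases hcomp : ∀ u v : ↥A, u ≠ v → (G.induce A).Adj u v
        · refine ⟨⟨a', ha'A⟩, Reaches.refl ha', ?_⟩
          intro u hu v hv huv
          exact hcomp u v huv
        · push_neg at hcomp
          obtain ⟨u, v, huv, hnadj'⟩ := hcomp
          obtain ⟨xh, yh, hxh, hyh, hxy, hnadjxy⟩ := IH ↥A (G.induce A) hcardA hG1 u v huv hnadj'
          have hnotboth : ¬ ((↑xh : V) ∈ S ∧ (↑yh : V) ∈ S) := by
            rintro ⟨h1, h2⟩
            apply hnadjxy
            rw [induce_adj_iff]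
            exact hSclique h1 h2 (fun hc => hxy (Subtype.ext hc))
          have hmemA : ∀ zh : ↥A, (↑zh : V) ∉ S → Reaches G S a' ↑zh := by
            intro zh hz
            rcases zh.2 with h | h
            · exact h
            · exact absurd h hz
          by_cases hxS : (↑xh : V) ∈ S
          · have hyS : (↑yh : V) ∉ S := fun h => hnotboth ⟨hxS, h⟩
            exact ⟨yh, hmemA yh hyS, hyh⟩
          · exact ⟨xh, hmemA xh hxS, hxh⟩
      obtain ⟨xh, hxR, hxsimp⟩ := step
      refine ⟨↑xh, hxR, ?_⟩
      -- lift simpliciality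
      have hnbhd : ∀ z : V, G.Adj ↑xh z → z ∈ A := by
        intro z hz
        by_cases hzS : z ∈ S
        · exact Or.inr hzS
        · exact Or.inl (hxR.adj hz hzS)
      intro z1 hz1 z2 hz2 hne12
      have hz1' : G.Adj ↑xh z1 := hz1
      have hz2' : G.Adj ↑xh z2 := hz2
      have hz1A := hnbhd z1 hz1'
      have hz2A := hnbhd z2 hz2'
      have h1 : (⟨z1, hz1A⟩ : ↥A) ∈ (G.induce A).neighborSet xh := by
        rw [SimpleGraph.mem_neighborSet, induce_adj_iff]
        exact hz1'
      have h2 : (⟨z2, hz2A⟩ : ↥A) ∈ (G.induce A).neighborSet xh := by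
        rw [SimpleGraph.mem_neighborSet, induce_adj_iff]
        exact hz2'
      have := hxsimp h1 h2 (fun hc => hne12 (congrArg Subtype.val hc))
      rw [induce_adj_iff] at this
      exact this
    obtain ⟨x, hxR, hxsimp⟩ := main_side a b hSsep haS hbS hminS
    obtain ⟨y, hyR, hysimp⟩ := main_side b a hSsep.symm hbS haS hminSb
    refine ⟨x, y, hxsimp, hysimp, ?_, ?_⟩
    · intro hcon
      exact hSsep.not_both hxR (hcon ▸ hyR)
    · intro hcon
      have hynS : y ∉ S := hyR.not_mem
      exact hSsep.not_both (hxR.adj hcon hynS) hyR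

theorem dirac {V : Type u} [Fintype V] [Nonempty V] (G : SimpleGraph V)
    (hG : G.IsChordal) : ∃ v, Simp G v := by
  classical
  by_cases hcomp : ∀ u v : V, u ≠ v → G.Adj u v
  · refine ⟨Classical.arbitrary V, ?_⟩
    intro u hu v hv huv
    exact hcomp u v huv
  · push_neg at hcomp
    obtain ⟨a, b, hne, hnadj⟩ := hcomp
    obtain ⟨x, _, hx, _⟩ := dirac_pair (Fintype.card V) V G le_rfl hG a b hne hnadj
    exact ⟨x, hx⟩


/-! ### RIP ordering of maximal cliques -/

/-- Running intersection property, membership-based. -/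
def RIPP (G : SimpleGraph V) (L : List (Finset V)) : Prop :=
  ∀ j (hj : j < L.length), 0 < j → ∃ t, ∃ ht : t < j,
    ∀ z : V, z ∈ L[j]'hj → (∃ i, ∃ hi : i < j, z ∈ L[i]'(hi.trans hj)) →
      z ∈ L[t]'(ht.trans hj)

lemma rip_isEmpty [Fintype V] [DecidableEq V] [IsEmpty V] (G : SimpleGraph V) :
    ∃ L : List (Finset V), L.Nodup ∧ (∀ s ∈ L, G.IsMaxClique s) ∧
      (∀ s : Finset V, G.IsMaxClique s → s ∈ L) ∧ RIPP G L := by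
  refine ⟨[∅], List.nodup_singleton _, ?_, ?_, ?_⟩
  · intro s hs
    rw [List.mem_singleton] at hs
    subst hs
    refine ⟨by simp [SimpleGraph.isClique_empty], fun t _ _ => ?_⟩
    rw [Finset.eq_empty_of_isEmpty t]
  · intro s _
    rw [List.mem_singleton, Finset.eq_empty_of_isEmpty s]
  · intro j hj h0
    simp only [List.length_singleton] at hj
    omega

theorem rip_exists : ∀ (n : ℕ) (V : Type u) [Fintype V] [DecidableEq V] (G : SimpleGraph V),
    Fintype.card V ≤ n → G.IsChordal →
    ∃ L : List (Finset V), L.Nodup ∧ (∀ s ∈ L, G.IsMaxClique s) ∧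
      (∀ s : Finset V, G.IsMaxClique s → s ∈ L) ∧ RIPP G L := by
  intro n
  induction n with
  | zero =>
    intro V _ _ G hcard hG
    have : IsEmpty V := Fintype.card_eq_zero_iff.1 (by omega)
    exact rip_isEmpty G
  | succ n IH =>
    intro V _ _ G hcard hG
    classical
    by_cases hEmp : IsEmpty V
    · exact rip_isEmpty G
    have : Nonempty V := not_isEmpty_iff.1 hEmp
    obtain ⟨v, hv⟩ := dirac G hG
    set W : Set V := {x | x ≠ v} with hW
    set G' : SimpleGraph ↥W := G.induce W with hG'def
    have hG'chordal : G'.IsChordal := chordal_induce hG W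
    have hcardW : Fintype.card ↥W ≤ n := by
      have hlt : Fintype.card ↥W < Fintype.card V := by
        apply Fintype.card_lt_of_injective_of_notMem (f := (Subtype.val : ↥W → V))
          Subtype.val_injective (b := v)
        rintro ⟨z, hzz⟩
        exact z.2 hzz
      omega
    obtain ⟨L', hL'nd, hL'max, hL'all, hL'rip⟩ := IH ↥W G' hcardW hG'chordal
    -- lifting maps
    set f : Finset ↥W → Finset V := fun s => s.image Subtype.val with hfdef
    set g : Finset V → Finset ↥W := fun D => D.subtype (fun x => x ∈ W) with hgdef
    have hfv : ∀ s, v ∉ f s := by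
      intro s hmem
      simp only [hfdef, Finset.mem_image] at hmem
      obtain ⟨a, _, ha⟩ := hmem
      exact a.2 ha
    have hf_inj : Function.Injective f := Finset.image_injective Subtype.val_injective
    have hgf : ∀ D : Finset V, v ∉ D → f (g D) = D := by
      intro D hD
      simp only [hfdef, hgdef]
      ext x
      simp only [Finset.mem_image, Finset.mem_subtype]
      constructor
      · rintro ⟨a, ha, rfl⟩; exact ha
      · intro hx
        have hxW : x ∈ W := fun hc => hD (hc ▸ hx)
        exact ⟨⟨x, hxW⟩, hx, rfl⟩
    have hfg : ∀ s : Finset ↥W, g (f s) = s := by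
      intro s
      apply hf_inj
      rw [hgf _ (hfv s)]
    have hg_sub : ∀ (s : Finset ↥W) (D : Finset V), f s ⊆ D → s ⊆ g D := by
      intro s D hsub x hx
      simp only [hgdef, Finset.mem_subtype]
      refine hsub ?_
      simp only [hfdef, Finset.mem_image]
      exact ⟨x, hx, rfl⟩
    have hclique_f : ∀ s : Finset ↥W, G'.IsClique (↑s : Set ↥W) ↔ G.IsClique (↑(f s) : Set V) := by
      intro s
      constructor
      · intro h x hx y hy hxy
        rw [Finset.mem_coe, hfdef, Finset.mem_image] at hx hy
        obtain ⟨a, ha, rfl⟩ := hx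
        obtain ⟨b, hb, rfl⟩ := hy
        have hab : a ≠ b := fun hc => hxy (by rw [hc])
        exact (induce_adj_iff (s := W)).1 (h ha hb hab)
      · intro h a ha b hb hab
        rw [Finset.mem_coe] at ha hb
        have h1 : (↑a : V) ∈ (↑(f s) : Set V) := by
          rw [Finset.mem_coe, hfdef, Finset.mem_image]; exact ⟨a, ha, rfl⟩
        have h2 : (↑b : V) ∈ (↑(f s) : Set V) := by
          rw [Finset.mem_coe, hfdef, Finset.mem_image]; exact ⟨b, hb, rfl⟩
        have hab' : (↑a : V) ≠ ↑b := fun hc => hab (Subtype.ext hc)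
        exact (induce_adj_iff (s := W)).2 (h h1 h2 hab')
    -- the clique of the simplicial vertex
    set Nv : Finset V := G.neighborFinset v with hNvdef
    have hNv : ∀ x, x ∈ Nv ↔ G.Adj v x := fun x => G.mem_neighborFinset v x
    set C : Finset V := insert v Nv with hCdef
    have hNvclique : G.IsClique (↑Nv : Set V) := by
      have hset : (↑Nv : Set V) = G.neighborSet v := by
        ext x
        simp only [Finset.mem_coe, hNv, SimpleGraph.mem_neighborSet]
      rw [hset]
      exact hv
    have hCclique : G.IsClique (↑C : Set V) := by
      rw [hCdef, Finset.coe_insert]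
      refine hNvclique.insert ?_
      intro b hb _
      rw [Finset.mem_coe, hNv] at hb
      exact hb
    have hsub_of_clique : ∀ t : Finset V, G.IsClique (↑t : Set V) → v ∈ t → t ⊆ C := by
      intro t ht hvt z hz
      by_cases hzv : z = v
      · rw [hCdef, hzv]; exact Finset.mem_insert_self v Nv
      · have : G.Adj v z := ht (Finset.mem_coe.2 hvt) (Finset.mem_coe.2 hz) (fun hc => hzv hc.symm)
        rw [hCdef]
        exact Finset.mem_insert_of_mem ((hNv z).2 this)
    have hCmax : G.IsMaxClique C := by
      refine ⟨hCclique, fun t ht hsub => ?_⟩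
      have hvt : v ∈ t := hsub (Finset.mem_insert_self v Nv)
      exact Finset.Subset.antisymm hsub (hsub_of_clique t ht hvt)
    have hCuniq : ∀ D : Finset V, G.IsMaxClique D → v ∈ D → D = C := by
      intro D hD hvD
      exact hD.2 C hCclique (hsub_of_clique D hD.1 hvD)
    set K : Finset ↥W := g Nv with hKdef
    have hfK : f K = Nv := by
      refine hgf Nv ?_
      intro hvN
      rw [hNv] at hvN
      exact G.loopless.irrefl v hvN
    have hKclique : G'.IsClique (↑K : Set ↥W) := by
      rw [hclique_f, hfK]
      exact hNvclique
    -- maximality lifting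
    have hmaxG_of : ∀ s : Finset ↥W, G'.IsMaxClique s → s ≠ K → G.IsMaxClique (f s) := by
      intro s hs hsK
      refine ⟨(hclique_f s).1 hs.1, fun t ht hsub => ?_⟩
      by_cases hvt : v ∈ t
      · exfalso
        have htC : t ⊆ C := hsub_of_clique t ht hvt
        have h1 : f s ⊆ Nv := by
          intro z hz
          have hzC := htC (hsub hz)
          rw [hCdef, Finset.mem_insert] at hzC
          rcases hzC with rfl | h
          · exact absurd hz (hfv s)
          · exact h
        rw [← hfK] at h1
        have h2 : s ⊆ K := by
          intro x hx
          have : (↑x : V) ∈ f K := h1 (Finset.mem_image.2 ⟨x, hx, rfl⟩)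
          simp only [hfdef, Finset.mem_image] at this
          obtain ⟨a, ha, hav⟩ := this
          rwa [Subtype.val_injective hav] at ha
        exact hsK (hs.2 K hKclique h2)
      · have hgt : G'.IsClique (↑(g t) : Set ↥W) := by
          rw [hclique_f, hgf t hvt]
          exact ht
        have := hs.2 (g t) hgt (hg_sub s t hsub)
        rw [this, hgf t hvt]
    have hmaxG'_of : ∀ D : Finset V, G.IsMaxClique D → v ∉ D → G'.IsMaxClique (g D) := by
      intro D hD hvD
      refine ⟨by rw [hclique_f, hgf D hvD]; exact hD.1, fun t ht hsub => ?_⟩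
      have htG : G.IsClique (↑(f t) : Set V) := (hclique_f t).1 ht
      have hDt : D ⊆ f t := by
        conv_lhs => rw [← hgf D hvD]
        intro z hz
        simp only [hfdef, Finset.mem_image] at hz ⊢
        obtain ⟨a, ha, rfl⟩ := hz
        exact ⟨a, hsub ha, rfl⟩
      have := hD.2 (f t) htG hDt
      rw [← hfg t, ← this, ← hgf D hvD, hfg]
    by_cases hKL : K ∈ L'
    · -- Case A : replace K by C
      set φ : Finset ↥W → Finset V := fun s => if s = K then C else f s with hφdef
      have hφv : ∀ s, v ∈ φ s → s = K := by
        intro s hmem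
        simp only [hφdef] at hmem
        by_contra hne
        rw [if_neg hne] at hmem
        exact hfv s hmem
      have hφsub1 : ∀ s z, z ∈ φ s → z ≠ v → z ∈ f s := by
        intro s z hz hzv
        simp only [hφdef] at hz
        by_cases hsK : s = K
        · rw [if_pos hsK] at hz
          rw [hCdef, Finset.mem_insert] at hz
          rcases hz with rfl | hz
          · exact absurd rfl hzv
          · rw [hsK, hfK]; exact hz
        · rwa [if_neg hsK] at hz
      have hφsup : ∀ s, f s ⊆ φ s := by
        intro s
        simp only [hφdef]
        by_cases hsK : s = K
        · rw [if_pos hsK, hsK, hfK, hCdef]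
          exact Finset.subset_insert v Nv
        · rw [if_neg hsK]
      refine ⟨L'.map φ, ?_, ?_, ?_, ?_⟩
      · refine List.Nodup.map_on ?_ hL'nd
        intro x hx y hy hxy
        by_cases hxK : x = K <;> by_cases hyK : y = K
        · rw [hxK, hyK]
        · exfalso
          simp only [hφdef] at hxy
          rw [if_pos hxK, if_neg hyK] at hxy
          exact hfv y (hxy ▸ Finset.mem_insert_self v Nv)
        · exfalso
          simp only [hφdef] at hxy
          rw [if_neg hxK, if_pos hyK] at hxy
          exact hfv x (hxy.symm ▸ Finset.mem_insert_self v Nv)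
        · simp only [hφdef] at hxy
          rw [if_neg hxK, if_neg hyK] at hxy
          exact hf_inj hxy
      · intro s hs
        rw [List.mem_map] at hs
        obtain ⟨x, hx, rfl⟩ := hs
        by_cases hxK : x = K
        · simp only [hφdef]; rw [if_pos hxK]; exact hCmax
        · simp only [hφdef]; rw [if_neg hxK]; exact hmaxG_of x (hL'max x hx) hxK
      · intro D hD
        by_cases hvD : v ∈ D
        · rw [hCuniq D hD hvD, List.mem_map]
          exact ⟨K, hKL, by simp only [hφdef, if_pos rfl]⟩
        · have hgD := hmaxG'_of D hD hvD
          have hgDK : g D ≠ K := by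
            intro hc
            have hDNv : D = Nv := by rw [← hgf D hvD, hc, hfK]
            have hD' := hD
            rw [hDNv] at hD'
            have h2 : Nv = C := hD'.2 C hCclique (by rw [hCdef]; exact Finset.subset_insert v Nv)
            have hvNv : v ∈ Nv := by rw [h2, hCdef]; exact Finset.mem_insert_self v Nv
            rw [hNv] at hvNv
            exact G.loopless.irrefl v hvNv
          rw [List.mem_map]
          exact ⟨g D, hL'all (g D) hgD, by simp only [hφdef]; rw [if_neg hgDK, hgf D hvD]⟩
      · intro j hj h0
        rw [List.length_map] at hj
        obtain ⟨t, ht, hprop⟩ := hL'rip j hj h0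
        refine ⟨t, ht, ?_⟩
        intro z hzj hex
        simp only [List.getElem_map] at hzj
        have hzv : z ≠ v := by
          rintro rfl
          obtain ⟨i, hi, hzi⟩ := hex
          simp only [List.getElem_map] at hzi
          have h1 := hφv _ hzj
          have h2 := hφv _ hzi
          have : L'[i]'(hi.trans hj) = L'[j]'hj := by rw [h1, h2]
          have := (List.Nodup.getElem_inj_iff hL'nd).1 this
          omega
        have hzfj : z ∈ f (L'[j]'hj) := hφsub1 _ z hzj hzv
        simp only [hfdef, Finset.mem_image] at hzfj
        obtain ⟨a, ha, rfl⟩ := hzfj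
        simp only [List.getElem_map]
        refine hφsup _ ?_
        simp only [hfdef, Finset.mem_image]
        refine ⟨a, ?_, rfl⟩
        refine hprop a ha ?_
        obtain ⟨i, hi, hzi⟩ := hex
        simp only [List.getElem_map] at hzi
        have hzfi : (↑a : V) ∈ f (L'[i]'(hi.trans hj)) := hφsub1 _ _ hzi hzv
        simp only [hfdef, Finset.mem_image] at hzfi
        obtain ⟨b, hb, hba⟩ := hzfi
        refine ⟨i, hi, ?_⟩
        rwa [Subtype.val_injective hba] at hb
    · -- Case B : append C at the end
      obtain ⟨E, hEmax, hKE⟩ := exists_maxclique_supset (G := G') hKclique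
      have hEL : E ∈ L' := hL'all E hEmax
      obtain ⟨tE, htE, hEt⟩ := List.mem_iff_getElem.1 hEL
      refine ⟨L'.map f ++ [C], ?_, ?_, ?_, ?_⟩
      · rw [List.nodup_append]
        refine ⟨hL'nd.map hf_inj, List.nodup_singleton _, ?_⟩
        intro x hx x' hx2 hxx'
        rw [← hxx'] at hx2
        rw [List.mem_singleton] at hx2
        subst hx2
        rw [List.mem_map] at hx
        obtain ⟨y, _, hy⟩ := hx
        exact hfv y (hy ▸ Finset.mem_insert_self v Nv)
      · intro s hs
        rw [List.mem_append] at hs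
        rcases hs with hs | hs
        · rw [List.mem_map] at hs
          obtain ⟨x, hx, rfl⟩ := hs
          refine hmaxG_of x (hL'max x hx) ?_
          rintro rfl
          exact hKL hx
        · rw [List.mem_singleton] at hs
          subst hs
          exact hCmax
      · intro D hD
        rw [List.mem_append]
        by_cases hvD : v ∈ D
        · right
          rw [List.mem_singleton]
          exact hCuniq D hD hvD
        · left
          rw [List.mem_map]
          exact ⟨g D, hL'all (g D) (hmaxG'_of D hD hvD), hgf D hvD⟩
      · intro j hj h0
        rw [List.length_append, List.length_map, List.length_singleton] at hj
        by_cases hjlen : j < L'.length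
        · obtain ⟨t, ht, hprop⟩ := hL'rip j hjlen h0
          refine ⟨t, ht, ?_⟩
          intro z hzj hex
          rw [List.getElem_append_left (by rw [List.length_map]; exact hjlen),
            List.getElem_map] at hzj
          rw [List.getElem_append_left (by rw [List.length_map]; omega),
            List.getElem_map]
          simp only [hfdef, Finset.mem_image] at hzj
          obtain ⟨a, ha, rfl⟩ := hzj
          simp only [hfdef, Finset.mem_image]
          refine ⟨a, ?_, rfl⟩
          refine hprop a ha ?_
          obtain ⟨i, hi, hzi⟩ := hex
          rw [List.getElem_append_left (by rw [List.length_map]; omega),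
            List.getElem_map, hfdef, Finset.mem_image] at hzi
          obtain ⟨b, hb, hba⟩ := hzi
          refine ⟨i, hi, ?_⟩
          rwa [Subtype.val_injective hba] at hb
        · have hjeq : j = L'.length := by omega
          refine ⟨tE, by omega, ?_⟩
          intro z hzj hex
          have hzC : z ∈ C := by
            rw [List.getElem_append_right (by rw [List.length_map]; omega)] at hzj
            simpa [List.length_map, hjeq] using hzj
          obtain ⟨i, hi, hzi⟩ := hex
          have hilen : i < L'.length := by omega
          rw [List.getElem_append_left (by rw [List.length_map]; exact hilen),
            List.getElem_map, hfdef, Finset.mem_image] at hzi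
          obtain ⟨a, ha, rfl⟩ := hzi
          have haK : a ∈ K := by
            simp only [hKdef, hgdef, Finset.mem_subtype]
            have : (↑a : V) ≠ v := a.2
            rw [hCdef, Finset.mem_insert] at hzC
            rcases hzC with h | h
            · exact absurd h this
            · exact h
          rw [List.getElem_append_left (by rw [List.length_map]; exact htE.trans_le (by omega)),
            List.getElem_map, hfdef, Finset.mem_image]
          exact ⟨a, by rw [hEt]; exact hKE haK, rfl⟩


lemma exists_cons {u v : V} (p : G.Walk u v) (h : p.length ≠ 0) :
    ∃ (x : V) (h' : G.Adj u x) (q : G.Walk x v), p = Walk.cons h' q := by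
  cases p with
  | nil => simp at h
  | cons h' q => exact ⟨_, h', q, rfl⟩

end CliqueTreeProof

open CliqueTreeProof in
/-- **Existence of a clique tree.**  Every chordal graph (with a nonempty list
`C 0, …, C (l-1)` enumerating its maximal cliques) admits a tree `T` on the set
of cliques satisfying the clique intersection property: for any two distinct
cliques `C i` and `C j`, the intersection `C i ∩ C j` is contained in every
clique on the (unique) path joining them in `T`. -/
theorem chordal_clique_tree {V : Type*} [Fintype V] [DecidableEq V] {l : ℕ} (hl : 0 < l)
    (G : SimpleGraph V) (hG : G.IsChordal)
    (C : Fin l → Finset V)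
    (hinj : Function.Injective C)
    (hclique : ∀ i, G.IsMaxClique (C i))
    (hall : ∀ s : Finset V, G.IsMaxClique s → ∃ i, C i = s) :
    ∃ T : SimpleGraph (Fin l), T.IsTree ∧
      ∀ i j : Fin l, i ≠ j → ∀ (p : T.Walk i j), p.IsPath →
        ∀ k ∈ p.support, C i ∩ C j ⊆ C k := by
  classical
  obtain ⟨L, hLnd, hLmax, hLall, hLrip⟩ :=
    rip_exists (Fintype.card V) V G le_rfl hG
  have hmemL : ∀ i, C i ∈ L := fun i => hLall (C i) (hclique i)
  set r : Fin l → ℕ := fun i => List.idxOf (C i) L with hrdef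
  have hrlt : ∀ i, r i < L.length := fun i => List.idxOf_lt_length_iff.2 (hmemL i)
  have hgetr : ∀ i, L[r i]'(hrlt i) = C i := fun i => List.getElem_idxOf (hrlt i)
  have hrinj : Function.Injective r := by
    intro i j hij
    apply hinj
    have h1 := hgetr i
    have h2 := hgetr j
    rw [← h1, ← h2]
    congr 1
  have hsurj : ∀ m, m < L.length → ∃ i, r i = m := by
    intro m hm
    obtain ⟨i, hi⟩ := hall (L[m]'hm) (hLmax _ (List.getElem_mem hm))
    refine ⟨i, ?_⟩
    have h1 : L[r i]'(hrlt i) = L[m]'hm := by rw [hgetr i, hi]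
    exact (List.Nodup.getElem_inj_iff hLnd).1 h1
  -- RIP in terms of the indexing
  have rip' : ∀ j : Fin l, 0 < r j → ∃ t : Fin l, r t < r j ∧
      ∀ z ∈ C j, (∃ i : Fin l, r i < r j ∧ z ∈ C i) → z ∈ C t := by
    intro j h0
    obtain ⟨t', ht', hprop⟩ := hLrip (r j) (hrlt j) h0
    obtain ⟨t, htr⟩ := hsurj t' (ht'.trans (hrlt j))
    subst htr
    refine ⟨t, ht', ?_⟩
    intro z hz hex
    have h1 : z ∈ L[r j]'(hrlt j) := by rw [hgetr j]; exact hz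
    have h2 : ∃ i, ∃ hi : i < r j, z ∈ L[i]'(hi.trans (hrlt j)) := by
      obtain ⟨i, hi, hzi⟩ := hex
      exact ⟨r i, hi, by rw [hgetr i]; exact hzi⟩
    have h3 := hprop z h1 h2
    rwa [hgetr t] at h3
  set par : Fin l → Fin l := fun j => if h : 0 < r j then (rip' j h).choose else j
    with hpardef
  have hpar_lt : ∀ j, 0 < r j → r (par j) < r j := by
    intro j h0
    simp only [hpardef, dif_pos h0]
    exact (rip' j h0).choose_spec.1
  have hpar_prop : ∀ j, 0 < r j → ∀ z ∈ C j, (∃ i : Fin l, r i < r j ∧ z ∈ C i) →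
      z ∈ C (par j) := by
    intro j h0
    simp only [hpardef, dif_pos h0]
    exact (rip' j h0).choose_spec.2
  have hpar_root : ∀ j, r j = 0 → par j = j := by
    intro j h0
    simp only [hpardef, dif_neg (by omega : ¬ 0 < r j)]
  set T : SimpleGraph (Fin l) := SimpleGraph.fromRel (fun i j => par i = j) with hTdef
  have hTadj : ∀ i j, T.Adj i j ↔ i ≠ j ∧ (par i = j ∨ par j = i) := by
    intro i j
    rw [hTdef, SimpleGraph.fromRel_adj]
  have T1 : ∀ i j, T.Adj i j → r i < r j → i = par j := by
    intro i j hadj hlt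
    rw [hTadj] at hadj
    rcases hadj.2 with h | h
    · by_cases h0 : 0 < r i
      · have := hpar_lt i h0
        rw [h] at this
        omega
      · have := hpar_root i (by omega)
        rw [this] at h
        exact absurd h hadj.1
    · exact h.symm
  -- connectivity
  obtain ⟨i0, hi0⟩ := hsurj 0 (by
    have := hrlt ⟨0, hl⟩
    omega)
  have hreach : ∀ j, T.Reachable j i0 := by
    have : ∀ n (j : Fin l), r j = n → T.Reachable j i0 := by
      intro n
      induction n using Nat.strong_induction_on with
      | _ n ih =>
        intro j hj
        by_cases h0 : 0 < r j
        · have hadj : T.Adj j (par j) := by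
            rw [hTadj]
            refine ⟨?_, Or.inl rfl⟩
            intro hc
            have := hpar_lt j h0
            rw [← hc] at this
            omega
          have hrec := ih (r (par j)) (by have := hpar_lt j h0; omega) (par j) rfl
          exact hadj.reachable.trans hrec
        · have hj0 : r j = r i0 := by omega
          rw [hrinj hj0]
    exact fun j => this (r j) j rfl
  have hconn : T.Connected := by
    rw [SimpleGraph.connected_iff]
    exact ⟨fun a b => (hreach a).trans (hreach b).symm, ⟨i0⟩⟩
  -- rank bound along paths
  have hbound : ∀ (i j : Fin l) (p : T.Walk i j), p.IsPath →
      ∀ k ∈ p.support, r k ≤ max (r i) (r j) := by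
    intro i j p hp k hk
    obtain ⟨m, hmo⟩ : ∃ m, m ∈ p.support.argmax r := by
      cases hma : p.support.argmax r with
      | none => exact absurd (List.argmax_eq_none.1 hma) p.support_ne_nil
      | some m => exact ⟨m, Option.mem_def.mpr rfl⟩
    have hmmem : m ∈ p.support := List.argmax_mem hmo
    have hmax : ∀ a ∈ p.support, r a ≤ r m := fun a ha => List.le_of_mem_argmax ha hmo
    suffices hsuff : m = i ∨ m = j by
      rcases hsuff with rfl | rfl
      · exact le_trans (hmax k hk) (le_max_left _ _)
      · exact le_trans (hmax k hk) (le_max_right _ _)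
    by_contra hcon
    push_neg at hcon
    obtain ⟨hmi, hmj⟩ := hcon
    set q1 : T.Walk i m := p.takeUntil m hmmem with hq1def
    set q2 : T.Walk m j := p.dropUntil m hmmem with hq2def
    have hq1path : q1.IsPath := hp.takeUntil hmmem
    have hq2path : q2.IsPath := hp.dropUntil hmmem
    have hq1len : q1.length ≠ 0 := fun h => hmi (SimpleGraph.Walk.eq_of_length_eq_zero h).symm
    have hq2len : q2.length ≠ 0 := fun h => hmj (SimpleGraph.Walk.eq_of_length_eq_zero h)
    obtain ⟨z1, q1', h1, hdec1⟩ := exists_concat q1 hq1len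
    obtain ⟨z2, h2, q2', hdec2⟩ := exists_cons q2 hq2len
    have hz1q1 : z1 ∈ q1.support := by
      rw [hdec1, SimpleGraph.Walk.support_concat, List.mem_append]
      exact Or.inl q1'.end_mem_support
    have hz1p : z1 ∈ p.support := p.support_takeUntil_subset hmmem hz1q1
    have hz1m : z1 ≠ m := by
      intro hc
      have := not_mem_support_of_concat (hdec1 ▸ hq1path)
      exact this (hc ▸ q1'.end_mem_support)
    have hz2q2 : z2 ∈ q2'.support := q2'.start_mem_support
    have hz2q2' : z2 ∈ q2.support := by
      rw [hdec2, SimpleGraph.Walk.support_cons]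
      exact List.mem_cons_of_mem _ hz2q2
    have hz2p : z2 ∈ p.support := p.support_dropUntil_subset hmmem hz2q2' 
    have hz2m : z2 ≠ m := by
      intro hc
      have hpath2 := hdec2 ▸ hq2path
      rw [SimpleGraph.Walk.isPath_def, SimpleGraph.Walk.support_cons] at hpath2
      exact (List.nodup_cons.1 hpath2).1 (hc ▸ hz2q2)
    have hz1par : z1 = par m :=
      T1 z1 m h1 (lt_of_le_of_ne (hmax z1 hz1p) (fun hc => hz1m (hrinj hc)))
    have hz2par : z2 = par m :=
      T1 z2 m h2.symm (lt_of_le_of_ne (hmax z2 hz2p) (fun hc => hz2m (hrinj hc)))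
    -- z1 and z2 are in disjoint parts of the path
    have hpsup : p.support = q1.support ++ q2.support.tail := by
      conv_lhs => rw [← p.take_spec hmmem]
      rw [SimpleGraph.Walk.support_append]
    have hnd := hp.support_nodup
    rw [hpsup, List.nodup_append] at hnd
    have hz2tail : z2 ∈ q2.support.tail := by
      rw [hdec2, SimpleGraph.Walk.support_cons, List.tail_cons]
      exact hz2q2
    refine hnd.2.2 z1 hz1q1 z1 ?_ rfl
    rw [hz1par, ← hz2par]
    exact hz2tail
  -- acyclicity
  have hacyc : T.IsAcyclic := by
    intro v c hcyc
    obtain ⟨m, hmo⟩ : ∃ m, m ∈ c.support.argmax r := by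
      cases hma : c.support.argmax r with
      | none => exact absurd (List.argmax_eq_none.1 hma) c.support_ne_nil
      | some m => exact ⟨m, Option.mem_def.mpr rfl⟩
    have hmmem : m ∈ c.support := List.argmax_mem hmo
    have hmax : ∀ a ∈ c.support, r a ≤ r m := fun a ha => List.le_of_mem_argmax ha hmo
    set c' : T.Walk m m := c.rotate m hmmem with hc'def
    have hc'cyc : c'.IsCycle := hcyc.rotate hmmem
    have hmax' : ∀ a ∈ c'.support, r a ≤ r m := by
      intro a ha
      rw [c'.support_eq_cons, List.mem_cons] at ha
      rcases ha with rfl | ha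
      · exact le_refl _
      · have hperm := SimpleGraph.Walk.support_rotate c m hmmem
        have : a ∈ c.support.tail := hperm.mem_iff.1 ha
        exact hmax a (List.mem_of_mem_tail this)
    have hc'len : 3 ≤ c'.length := hc'cyc.three_le_length
    obtain ⟨z2, h2, q, hdecc⟩ := exists_cons c' (by omega)
    have hqpath : q.IsPath := by
      have := hc'cyc
      rw [hdecc, SimpleGraph.Walk.cons_isCycle_iff] at this
      exact this.1
    have hqlen : 2 ≤ q.length := by
      have := congr_arg SimpleGraph.Walk.length hdecc
      rw [SimpleGraph.Walk.length_cons] at this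
      omega
    obtain ⟨z1, q1, h1, hdec1⟩ := exists_concat q (by omega)
    have hz1q : z1 ∈ q.support := by
      rw [hdec1, SimpleGraph.Walk.support_concat, List.mem_append]
      exact Or.inl q1.end_mem_support
    have hz1c' : z1 ∈ c'.support := by
      rw [hdecc, SimpleGraph.Walk.support_cons]
      exact List.mem_cons_of_mem _ hz1q
    have hz2c' : z2 ∈ c'.support := by
      rw [hdecc, SimpleGraph.Walk.support_cons]
      exact List.mem_cons_of_mem _ q.start_mem_support
    have hz1m : z1 ≠ m := by
      intro hc
      have := not_mem_support_of_concat (hdec1 ▸ hqpath)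
      exact this (hc ▸ q1.end_mem_support)
    have hz2m : z2 ≠ m := h2.ne'
    have hz1par : z1 = par m :=
      T1 z1 m h1 (lt_of_le_of_ne (hmax' z1 hz1c') (fun hc => hz1m (hrinj hc)))
    have hz2par : z2 = par m :=
      T1 z2 m h2.symm (lt_of_le_of_ne (hmax' z2 hz2c') (fun hc => hz2m (hrinj hc)))
    have hz12 : z1 = z2 := by rw [hz1par, hz2par]
    subst hz12
    have hq1path : q1.IsPath := isPath_of_concat (hdec1 ▸ hqpath)
    have := path_loop_nil q1 hq1path
    rw [hdec1, this] at hqlen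
    simp at hqlen
  -- the clique intersection property
  have main : ∀ n (i j : Fin l), i ≠ j → ∀ p : T.Walk i j, p.IsPath →
      max (r i) (r j) ≤ n → ∀ k ∈ p.support, C i ∩ C j ⊆ C k := by
    intro n
    induction n using Nat.strong_induction_on with
    | _ n ihn =>
      have core : ∀ i j : Fin l, i ≠ j → r i < r j → ∀ p : T.Walk i j, p.IsPath →
          max (r i) (r j) ≤ n → ∀ k ∈ p.support, C i ∩ C j ⊆ C k := by
        intro i j hij hlt p hp hn k hk
        have h0j : 0 < r j := by omega
        have hplen : p.length ≠ 0 := fun h => hij (SimpleGraph.Walk.eq_of_length_eq_zero h)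
        obtain ⟨z1, q, hadj1, hdec⟩ := exists_concat p hplen
        have hz1q : z1 ∈ q.support := q.end_mem_support
        have hz1p : z1 ∈ p.support := by
          rw [hdec, SimpleGraph.Walk.support_concat, List.mem_append]
          exact Or.inl hz1q
        have hz1j : z1 ≠ j := by
          intro hc
          have := not_mem_support_of_concat (hdec ▸ hp)
          exact this (hc ▸ hz1q)
        have hz1r : r z1 < r j := by
          have := hbound i j p hp z1 hz1p
          have hne : r z1 ≠ r j := fun hc => hz1j (hrinj hc)
          omega
        have hz1par : z1 = par j := T1 z1 j hadj1 hz1r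
        have hsubJ : C i ∩ C j ⊆ C z1 := by
          intro z hz
          rw [Finset.mem_inter] at hz
          rw [hz1par]
          exact hpar_prop j h0j z hz.2 ⟨i, hlt, hz.1⟩
        rw [hdec, SimpleGraph.Walk.support_concat, List.mem_append,
          List.mem_singleton] at hk
        rcases hk with hk | rfl
        · by_cases hiz : i = z1
          · subst hiz
            have hqpath : q.IsPath := isPath_of_concat (hdec ▸ hp)
            have hnil := path_loop_nil q hqpath
            rw [hnil, SimpleGraph.Walk.support_nil, List.mem_singleton] at hk
            subst hk
            exact Finset.inter_subset_left
          · have hqpath : q.IsPath := isPath_of_concat (hdec ▸ hp)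
            have hrec := ihn (max (r i) (r z1)) (by omega) i z1 hiz q hqpath le_rfl k hk
            intro z hz
            refine hrec ?_
            rw [Finset.mem_inter] at hz ⊢
            exact ⟨hz.1, hsubJ (Finset.mem_inter.2 hz)⟩
        · exact Finset.inter_subset_right
      intro i j hij p hp hn k hk
      rcases lt_trichotomy (r i) (r j) with hlt | heq | hgt
      · exact core i j hij hlt p hp hn k hk
      · exact absurd (hrinj heq) hij
      · have hk' : k ∈ p.reverse.support := by
          rw [SimpleGraph.Walk.support_reverse, List.mem_reverse]; exact hk
        have := core j i hij.symm hgt p.reverse hp.reverse (by omega) k hk'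
        rw [Finset.inter_comm]
        exact this
  exact ⟨T, ⟨hconn, hacyc⟩, fun i j hij p hp k hk =>
    main (max (r i) (r j)) i j hij p hp le_rfl k hk⟩
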